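/- Let h(Ã,B) = sup_{F ∈ ℝ^{d×d}} [Ã:F + (1/(2(G+L/2))) B:(G FFᵀF + (L/2)|F|²F) − (1/4)|FᵀF|²]. If |B|³ ≤ (27/8³)|Ã|, then h(Ã,B) ≥ (3/16)(|Ã|^{4/3} + |B|⁴). -/

import Mathlib

open Matrix

noncomputable def frob {d : ℕ} (F : Matrix (Fin d) (Fin d) ℝ) : ℝ :=
  Real.sqrt (∑ i, ∑ j, (F i j) ^ 2)

noncomputable def mdot {d : ℕ} (A B : Matrix (Fin d) (Fin d) ℝ) : ℝ :=
  ∑ i, ∑ j, A i j * B i j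

/-- The reduced Saint Venant–Kirchhoff dual function h(Ã, B). -/
noncomputable def svkh (G L : ℝ) {d : ℕ} (At B : Matrix (Fin d) (Fin d) ℝ) : ℝ :=
  sSup { z | ∃ F : Matrix (Fin d) (Fin d) ℝ,
    z = mdot At F
        + (1 / (2 * (G + L / 2))) * mdot B (G • (F * Fᵀ * F) + ((L / 2) * frob F ^ 2) • F)
        - (1/4) * frob (Fᵀ * F) ^ 2 }

namespace SvkAux

variable {d : ℕ}

lemma sumsq_nonneg (F : Matrix (Fin d) (Fin d) ℝ) : 0 ≤ ∑ i, ∑ j, (F i j)^2 :=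
  Finset.sum_nonneg fun _ _ => Finset.sum_nonneg fun _ _ => sq_nonneg _

lemma frob_nonneg (F : Matrix (Fin d) (Fin d) ℝ) : 0 ≤ frob F := Real.sqrt_nonneg _

lemma frob_sq (F : Matrix (Fin d) (Fin d) ℝ) : frob F ^ 2 = ∑ i, ∑ j, (F i j)^2 :=
  Real.sq_sqrt (sumsq_nonneg F)

lemma mdot_self (F : Matrix (Fin d) (Fin d) ℝ) : mdot F F = frob F ^ 2 := by
  rw [frob_sq]; simp [mdot, sq]

lemma frob_le_of_sq_le {F : Matrix (Fin d) (Fin d) ℝ} {x : ℝ} (hx : 0 ≤ x)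
    (h : frob F ^ 2 ≤ x ^ 2) : frob F ≤ x := by
  have := Real.sqrt_le_sqrt h
  rwa [Real.sqrt_sq (frob_nonneg F), Real.sqrt_sq hx] at this

lemma mdot_sq_le (A B : Matrix (Fin d) (Fin d) ℝ) :
    (mdot A B) ^ 2 ≤ frob A ^ 2 * frob B ^ 2 := by
  rw [frob_sq, frob_sq]
  have h1 : mdot A B = ∑ p : Fin d × Fin d, A p.1 p.2 * B p.1 p.2 :=
    (Fintype.sum_prod_type (fun p : Fin d × Fin d => A p.1 p.2 * B p.1 p.2)).symm
  have h2 : (∑ i, ∑ j, (A i j)^2) = ∑ p : Fin d × Fin d, (A p.1 p.2)^2 :=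
    (Fintype.sum_prod_type (fun p : Fin d × Fin d => (A p.1 p.2)^2)).symm
  have h3 : (∑ i, ∑ j, (B i j)^2) = ∑ p : Fin d × Fin d, (B p.1 p.2)^2 :=
    (Fintype.sum_prod_type (fun p : Fin d × Fin d => (B p.1 p.2)^2)).symm
  rw [h1, h2, h3]
  exact Finset.sum_mul_sq_le_sq_mul_sq _ _ _

lemma abs_mdot_le (A B : Matrix (Fin d) (Fin d) ℝ) : |mdot A B| ≤ frob A * frob B := by
  have h := mdot_sq_le A B
  have h1 : |mdot A B| = Real.sqrt ((mdot A B)^2) := (Real.sqrt_sq_eq_abs _).symm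
  rw [h1]
  have h2 : frob A * frob B = Real.sqrt ((frob A * frob B)^2) := by
    rw [Real.sqrt_sq (mul_nonneg (frob_nonneg A) (frob_nonneg B))]
  rw [h2]
  apply Real.sqrt_le_sqrt
  nlinarith [frob_nonneg A, frob_nonneg B]

lemma mdot_le (A B : Matrix (Fin d) (Fin d) ℝ) : mdot A B ≤ frob A * frob B :=
  le_trans (le_abs_self _) (abs_mdot_le A B)

lemma neg_le_mdot (A B : Matrix (Fin d) (Fin d) ℝ) : -(frob A * frob B) ≤ mdot A B :=
  neg_le_of_abs_le (abs_mdot_le A B)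

lemma frob_transpose (F : Matrix (Fin d) (Fin d) ℝ) : frob Fᵀ = frob F := by
  unfold frob
  rw [Finset.sum_comm]
  simp [transpose_apply]

lemma frob_smul (c : ℝ) (F : Matrix (Fin d) (Fin d) ℝ) : frob (c • F) = |c| * frob F := by
  unfold frob
  have h : ∀ i j, ((c • F) i j)^2 = c^2 * (F i j)^2 := by
    intro i j; simp [Matrix.smul_apply, smul_eq_mul]; ring
  simp only [h, ← Finset.mul_sum]
  rw [Real.sqrt_mul (sq_nonneg c), Real.sqrt_sq_eq_abs]

lemma frob_mul_le (A B : Matrix (Fin d) (Fin d) ℝ) : frob (A * B) ≤ frob A * frob B := by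
  apply frob_le_of_sq_le (mul_nonneg (frob_nonneg A) (frob_nonneg B))
  rw [mul_pow, frob_sq, frob_sq, frob_sq]
  calc (∑ i, ∑ j, ((A * B) i j)^2)
      ≤ ∑ i, ∑ j, (∑ k, (A i k)^2) * (∑ k, (B k j)^2) := by
        apply Finset.sum_le_sum; intro i _
        apply Finset.sum_le_sum; intro j _
        rw [Matrix.mul_apply]
        exact Finset.sum_mul_sq_le_sq_mul_sq _ _ _
    _ = (∑ i, ∑ k, (A i k)^2) * (∑ j, ∑ k, (B k j)^2) :=
        (Finset.sum_mul_sum Finset.univ Finset.univ (fun i => ∑ k, (A i k)^2)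
          (fun j => ∑ k, (B k j)^2)).symm
    _ = (∑ i, ∑ k, (A i k)^2) * (∑ k, ∑ j, (B k j)^2) := by
        rw [Finset.sum_comm (s := Finset.univ) (t := Finset.univ)
          (f := fun j k => (B k j)^2)]

lemma mdot_smul (c : ℝ) (B X : Matrix (Fin d) (Fin d) ℝ) : mdot B (c • X) = c * mdot B X := by
  unfold mdot
  rw [Finset.mul_sum]
  refine Finset.sum_congr rfl fun i _ => ?_
  rw [Finset.mul_sum]
  refine Finset.sum_congr rfl fun j _ => ?_
  simp [Matrix.smul_apply]; ring

lemma mdot_smul_left (c : ℝ) (B X : Matrix (Fin d) (Fin d) ℝ) :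
    mdot (c • B) X = c * mdot B X := by
  unfold mdot
  rw [Finset.mul_sum]
  refine Finset.sum_congr rfl fun i _ => ?_
  rw [Finset.mul_sum]
  refine Finset.sum_congr rfl fun j _ => ?_
  simp [Matrix.smul_apply]; ring

lemma frob_add_sq (X Y : Matrix (Fin d) (Fin d) ℝ) :
    frob (X + Y) ^ 2 = frob X ^ 2 + 2 * mdot X Y + frob Y ^ 2 := by
  simp only [frob_sq, mdot, Matrix.add_apply]
  rw [Finset.mul_sum, ← Finset.sum_add_distrib, ← Finset.sum_add_distrib]
  refine Finset.sum_congr rfl fun i _ => ?_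
  rw [Finset.mul_sum, ← Finset.sum_add_distrib, ← Finset.sum_add_distrib]
  refine Finset.sum_congr rfl fun j _ => ?_
  ring

lemma mdot_eq_trace (A B : Matrix (Fin d) (Fin d) ℝ) : mdot A B = (Aᵀ * B).trace := by
  unfold mdot
  rw [Matrix.trace]
  simp only [Matrix.diag_apply, Matrix.mul_apply, Matrix.transpose_apply]
  exact Finset.sum_comm

lemma mdot_cube (F : Matrix (Fin d) (Fin d) ℝ) :
    mdot (F * (Fᵀ * F)) F = frob (Fᵀ * F) ^ 2 := by
  rw [← mdot_self, mdot_eq_trace, mdot_eq_trace]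
  congr 1
  rw [Matrix.transpose_mul, Matrix.transpose_mul, Matrix.transpose_transpose]
  noncomm_ring

lemma frob_sq_le_sqrtd_mul (F : Matrix (Fin d) (Fin d) ℝ) :
    frob F ^ 2 ≤ Real.sqrt d * frob (Fᵀ * F) := by
  have h1 : frob F ^ 2 = mdot 1 (Fᵀ * F) := by
    rw [frob_sq]
    unfold mdot
    rw [Finset.sum_comm]
    refine Finset.sum_congr rfl fun j _ => ?_
    simp only [Matrix.one_apply, Matrix.mul_apply, Matrix.transpose_apply, ite_mul, one_mul,
      zero_mul]
    rw [Finset.sum_ite_eq]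
    simp [sq]
  have h2 : frob (1 : Matrix (Fin d) (Fin d) ℝ) = Real.sqrt d := by
    unfold frob
    congr 1
    have h3 : ∀ i : Fin d, (∑ j, ((1 : Matrix (Fin d) (Fin d) ℝ) i j)^2) = 1 := by
      intro i
      simp [Matrix.one_apply, apply_ite (·^2)]
    simp [h3]
  rw [h1, ← h2]
  exact le_trans (le_abs_self _) (abs_mdot_le _ _)

lemma quartic_bound (α β γ s : ℝ) (hα : 0 ≤ α) (hβ : 0 ≤ β) (hγ : 0 < γ) (hs : 0 ≤ s) :
    α*s + β*s^3 - γ*s^4 ≤ α*((α+β+1)/γ + 1) + β*((α+β+1)/γ + 1)^3 := by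
  set T := (α+β+1)/γ + 1 with hT
  have hγT : γ * T = α + β + 1 + γ := by rw [hT]; field_simp
  clear_value T
  clear hT
  have hT1 : 1 ≤ T := by nlinarith
  rcases le_or_gt s T with h | h
  · have h1 : α * s ≤ α * T := mul_le_mul_of_nonneg_left h hα
    have h2 : β * s^3 ≤ β * T^3 := mul_le_mul_of_nonneg_left (pow_le_pow_left₀ hs h 3) hβ
    nlinarith [pow_nonneg hs 4]
  · have hs1 : 1 ≤ s := le_trans hT1 h.le
    have hs2 : 1 ≤ s^2 := by nlinarith
    have h3 : s ≤ s^3 := by nlinarith [mul_le_mul_of_nonneg_left hs2 hs]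
    have h4 : γ*T*s^3 ≤ γ*s^4 := by
      nlinarith [mul_nonneg (mul_nonneg hγ.le (sub_nonneg.2 h.le)) (pow_nonneg hs 3)]
    have h5 : α*s + β*s^3 ≤ γ*T*s^3 := by
      have h6 : (α + β + 1 + γ) * s^3 ≥ α*s^3 + β*s^3 := by
        nlinarith [pow_nonneg hs 3]
      nlinarith [mul_le_mul_of_nonneg_left h3 hα]
    have h6 : 0 ≤ α*T + β*T^3 := by
      have h7 : (0:ℝ) ≤ T := by linarith
      positivity
    linarith

lemma final_ineq (u b : ℝ) (hu : 0 < u) (hb0 : 0 ≤ b) (hbu : b ≤ (3/8)*u) :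
    (3/16) * (u^4 + b^4) ≤ u^4 - b * u^3 / 2 - (1/4) * u^4 := by
  have h1 : b * u^3 ≤ (3/8) * u * u^3 := mul_le_mul_of_nonneg_right hbu (pow_nonneg hu.le 3)
  have h2 : b^4 ≤ ((3/8)*u)^4 := pow_le_pow_left₀ hb0 hbu 4
  nlinarith [pow_pos hu 4]

lemma key_norm_bound {G L : ℝ} (hG : 0 < G) (hGL2 : 0 < G + L / 2)
    (hcase : 0 ≤ G + L ∨ d = 1) (F : Matrix (Fin d) (Fin d) ℝ) :
    frob (G • (F * Fᵀ * F) + ((L / 2) * frob F ^ 2) • F) ≤ (G + L / 2) * frob F ^ 3 := by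
  have hq0 : 0 ≤ frob F ^ 2 := by positivity
  rcases hcase with hGLpos | hd1
  · set q := frob F ^ 2 with hq
    set p := frob (Fᵀ * F) ^ 2 with hp
    have hp0 : 0 ≤ p := by rw [hp]; positivity
    apply frob_le_of_sq_le (mul_nonneg hGL2.le (pow_nonneg (frob_nonneg F) 3))
    rw [frob_add_sq]
    set m := frob (F * (Fᵀ * F)) with hm
    have e1 : frob (G • (F * Fᵀ * F)) ^ 2 = G^2 * m^2 := by
      rw [hm, mul_assoc, frob_smul, mul_pow, sq_abs]
    have e2 : mdot (G • (F * Fᵀ * F)) (((L / 2) * q) • F) = G * ((L/2) * q) * p := by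
      rw [mdot_smul, mdot_smul_left, mul_assoc F, mdot_cube, ← hp]; ring
    have e3 : frob (((L / 2) * q) • F) ^ 2 = (L/2 * q)^2 * q := by
      rw [frob_smul, mul_pow, sq_abs, hq]
    rw [e1, e2, e3]
    have hm2 : m^2 ≤ q * p := by
      have h1 : m ≤ frob F * frob (Fᵀ * F) := by rw [hm]; exact frob_mul_le _ _
      have h2 := pow_le_pow_left₀ (frob_nonneg _) h1 2
      rw [mul_pow] at h2
      rw [hm]; exact le_trans h2 (le_of_eq rfl)
    have hpq : p ≤ q^2 := by
      have h1 : frob (Fᵀ * F) ≤ frob F * frob F := by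
        have h2 := frob_mul_le Fᵀ F
        rwa [frob_transpose] at h2
      have h3 := pow_le_pow_left₀ (frob_nonneg _) h1 2
      rw [hp, hq]; nlinarith [frob_nonneg F]
    have hfc : (frob F ^ 3)^2 = q^3 := by rw [hq]; ring
    rw [mul_pow (G + L/2) (frob F ^3) 2, hfc]
    have hA : G^2*m^2 + G*L*(q*p) ≤ G*(G+L)*(q*p) := by
      nlinarith [mul_nonneg (sq_nonneg G) (sub_nonneg.2 hm2)]
    have hBd : G*(G+L)*(q*p) ≤ G*(G+L)*(q*q^2) := by
      apply mul_le_mul_of_nonneg_left _ (mul_nonneg hG.le hGLpos)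
      exact mul_le_mul_of_nonneg_left hpq hq0
    nlinarith [hA, hBd]
  · subst hd1
    have hXeq : G • (F * Fᵀ * F) + ((L / 2) * frob F ^ 2) • F
        = ((G + L/2) * frob F ^ 2) • F := by
      have hqv : frob F ^ 2 = F 0 0 ^ 2 := by
        rw [frob_sq]; simp [Fin.sum_univ_one]
      ext i j
      have hi : i = 0 := Subsingleton.elim i 0
      have hj : j = 0 := Subsingleton.elim j 0
      subst hi; subst hj
      simp [Matrix.mul_apply, Fin.sum_univ_one, hqv, Matrix.smul_apply, Matrix.add_apply]
      ring
    rw [hXeq, frob_smul, abs_of_nonneg (by positivity)]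
    have h1 : frob F ^ 3 = frob F ^2 * frob F := by ring
    rw [h1]; ring_nf; exact le_refl _

end SvkAux

open SvkAux

theorem svkh_lower_bound_small_B {d : ℕ} (G L : ℝ)
    (hG : 0 < G) (hGL : 0 < G + d * L / 2)
    (At B : Matrix (Fin d) (Fin d) ℝ)
    (hB : frob B ^ 3 ≤ (27 / 8 ^ 3) * frob At) :
    (3/16) * (frob At ^ ((4:ℝ)/3) + frob B ^ 4) ≤ svkh G L At B := by
  rcases Nat.eq_zero_or_pos d with hd0 | hd1
  · -- degenerate case d = 0
    subst hd0
    have hfA : frob At = 0 := by unfold frob; simp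
    have hfB : frob B = 0 := by unfold frob; simp
    rw [hfA, hfB, Real.zero_rpow (by norm_num : ((4:ℝ)/3) ≠ 0)]
    have hset : { z | ∃ F : Matrix (Fin 0) (Fin 0) ℝ,
        z = mdot At F
          + (1 / (2 * (G + L / 2))) * mdot B (G • (F * Fᵀ * F) + ((L / 2) * frob F ^ 2) • F)
          - (1/4) * frob (Fᵀ * F) ^ 2 } = {(0:ℝ)} := by
      ext z
      constructor
      · rintro ⟨F, rfl⟩
        have h1 : ∀ X : Matrix (Fin 0) (Fin 0) ℝ, mdot At X = 0 := by
          intro X; unfold mdot; simp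
        have h2 : ∀ X : Matrix (Fin 0) (Fin 0) ℝ, mdot B X = 0 := by
          intro X; unfold mdot; simp
        have h3 : ∀ X : Matrix (Fin 0) (Fin 0) ℝ, frob X = 0 := by
          intro X; unfold frob; simp
        simp [h1, h2, h3]
      · rintro rfl
        refine ⟨0, ?_⟩
        have h1 : ∀ X : Matrix (Fin 0) (Fin 0) ℝ, mdot At X = 0 := by
          intro X; unfold mdot; simp
        have h2 : ∀ X : Matrix (Fin 0) (Fin 0) ℝ, mdot B X = 0 := by
          intro X; unfold mdot; simp
        have h3 : ∀ X : Matrix (Fin 0) (Fin 0) ℝ, frob X = 0 := by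
          intro X; unfold frob; simp
        simp [h1, h2, h3]
    unfold svkh
    rw [hset, csSup_singleton]
    norm_num
  · -- main case d ≥ 1
    have hd1' : (1:ℝ) ≤ (d:ℝ) := by exact_mod_cast hd1
    have hGL2 : 0 < G + L / 2 := by
      rcases le_or_gt 0 L with h | h
      · linarith
      · have := mul_le_mul_of_nonpos_right hd1' h.le
        rw [one_mul] at this
        linarith
    have hcase : 0 ≤ G + L ∨ d = 1 := by
      by_cases h : 0 ≤ G + L
      · exact Or.inl h
      · right
        push_neg at h
        by_contra hne
        have hd2 : 2 ≤ d := by omega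
        have hd2' : (2:ℝ) ≤ (d:ℝ) := by exact_mod_cast hd2
        have hL : L < 0 := by nlinarith
        have := mul_le_mul_of_nonpos_right hd2' hL.le
        linarith
    have hGL2ne : (G + L / 2) ≠ 0 := ne_of_gt hGL2
    have hc : 1 / (2 * (G + L / 2)) * (G + L/2) = 1/2 := by
      rw [div_mul_eq_mul_div, one_mul, div_eq_div_iff (by positivity) (by norm_num)]
      ring
    set a := frob At with ha
    set b := frob B with hb
    have ha0 : 0 ≤ a := frob_nonneg At
    have hb0 : 0 ≤ b := frob_nonneg B
    -- the set
    set S := { z | ∃ F : Matrix (Fin d) (Fin d) ℝ,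
      z = mdot At F
          + (1 / (2 * (G + L / 2))) * mdot B (G • (F * Fᵀ * F) + ((L / 2) * frob F ^ 2) • F)
          - (1/4) * frob (Fᵀ * F) ^ 2 } with hS
    have hsvkh : svkh G L At B = sSup S := rfl
    -- boundedness
    have hγ : (0:ℝ) < 1/(4*(d:ℝ)) := by positivity
    set γ := (1:ℝ)/(4*(d:ℝ)) with hγdef
    set T := (a + b/2 + 1)/γ + 1 with hT
    have hbdd : BddAbove S := by
      refine ⟨a*T + (b/2)*T^3, ?_⟩
      rintro z ⟨F, rfl⟩
      set s := frob F with hs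
      have hs0 : 0 ≤ s := frob_nonneg F
      have t1 : mdot At F ≤ a * s := mdot_le At F
      have hx : frob (G • (F * Fᵀ * F) + ((L / 2) * frob F ^ 2) • F) ≤ (G + L/2) * s^3 :=
        key_norm_bound hG hGL2 hcase F
      have t2 : (1 / (2 * (G + L / 2))) *
          mdot B (G • (F * Fᵀ * F) + ((L / 2) * frob F ^ 2) • F) ≤ (b/2) * s^3 := by
        have h1 : mdot B (G • (F * Fᵀ * F) + ((L / 2) * frob F ^ 2) • F)
            ≤ b * ((G + L/2) * s^3) :=
          le_trans (mdot_le _ _) (mul_le_mul_of_nonneg_left hx hb0)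
        have h2 : (0:ℝ) < 1 / (2 * (G + L / 2)) := by positivity
        calc (1 / (2 * (G + L / 2))) *
              mdot B (G • (F * Fᵀ * F) + ((L / 2) * frob F ^ 2) • F)
            ≤ (1 / (2 * (G + L / 2))) * (b * ((G + L/2) * s^3)) :=
              mul_le_mul_of_nonneg_left h1 h2.le
          _ = (1 / (2 * (G + L / 2)) * (G + L/2)) * (b * s^3) := by ring
          _ = (b/2) * s^3 := by rw [hc]; ring
      have t3 : -((1:ℝ)/4) * frob (Fᵀ * F) ^ 2 ≤ -(γ * s^4) := by
        have h1 : s^2 ≤ Real.sqrt d * frob (Fᵀ * F) := frob_sq_le_sqrtd_mul F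
        have h2 : (s^2)^2 ≤ (Real.sqrt d * frob (Fᵀ * F))^2 :=
          pow_le_pow_left₀ (by positivity) h1 2
        have h3 : (Real.sqrt d * frob (Fᵀ * F))^2 = d * frob (Fᵀ * F)^2 := by
          rw [mul_pow, Real.sq_sqrt (by positivity : (0:ℝ) ≤ (d:ℝ))]
        have h4 : s^4 ≤ d * frob (Fᵀ * F)^2 := by
          rw [← h3]; calc s^4 = (s^2)^2 := by ring
            _ ≤ _ := h2
        have hd0' : (0:ℝ) < (d:ℝ) := by linarith
        rw [hγdef]
        rw [neg_mul, neg_le_neg_iff]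
        rw [div_mul_eq_mul_div, div_le_iff₀ (by positivity)]
        nlinarith [h4]
      have := quartic_bound a (b/2) γ s ha0 (by linarith) hγ hs0
      rw [← hT] at this
      linarith
    rw [hsvkh]
    -- split on a = 0
    rcases eq_or_lt_of_le ha0 with haz | hap
    · -- a = 0, hence b = 0
      have haz' : a = 0 := haz.symm
      have hbz : b = 0 := by
        have h1 : b^3 ≤ 0 := by rw [haz'] at hB; simpa using hB
        have h2 : b^3 = 0 := le_antisymm h1 (pow_nonneg hb0 3)
        exact pow_eq_zero_iff (by norm_num : (3:ℕ) ≠ 0) |>.mp h2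
      have hzero : (0:ℝ) ∈ S := by
        refine ⟨0, ?_⟩
        have hm0 : ∀ A : Matrix (Fin d) (Fin d) ℝ, mdot A 0 = 0 := by
          intro A; unfold mdot; simp
        have hz0 : frob (0 : Matrix (Fin d) (Fin d) ℝ) = 0 := by unfold frob; simp
        simp [hm0, hz0]
      have := le_csSup hbdd hzero
      rw [haz', hbz, Real.zero_rpow (by norm_num : ((4:ℝ)/3) ≠ 0)]
      norm_num
      linarith
    · -- a > 0
      set u := a ^ ((1:ℝ)/3) with hu
      have hup : 0 < u := Real.rpow_pos_of_pos hap _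
      have hu3 : u^3 = a := by
        rw [hu, ← Real.rpow_natCast (a ^ ((1:ℝ)/3)) 3, ← Real.rpow_mul ha0]
        norm_num
      have ha43 : a ^ ((4:ℝ)/3) = u^4 := by
        rw [hu, ← Real.rpow_natCast (a ^ ((1:ℝ)/3)) 4, ← Real.rpow_mul ha0]
        norm_num
      set F₀ : Matrix (Fin d) (Fin d) ℝ := ((u^2)⁻¹) • At with hF₀
      have e_frob : frob F₀ = u := by
        rw [hF₀, frob_smul, abs_of_pos (by positivity), ← ha, ← hu3]
        field_simp
      have e_mdot : mdot At F₀ = u^4 := by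
        rw [hF₀, mdot_smul, mdot_self, ← ha, ← hu3]
        field_simp
      have hmem : (mdot At F₀
          + (1 / (2 * (G + L / 2))) * mdot B (G • (F₀ * F₀ᵀ * F₀) + ((L / 2) * frob F₀ ^ 2) • F₀)
          - (1/4) * frob (F₀ᵀ * F₀) ^ 2) ∈ S := ⟨F₀, rfl⟩
      refine le_trans ?_ (le_csSup hbdd hmem)
      -- estimate the witness value
      have hx : frob (G • (F₀ * F₀ᵀ * F₀) + ((L / 2) * frob F₀ ^ 2) • F₀)
          ≤ (G + L/2) * u^3 := by
        have h := key_norm_bound hG hGL2 hcase F₀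
        rw [e_frob] at h
        rw [e_frob]
        exact h
      have hmid : -(b * u^3 / 2) ≤ (1 / (2 * (G + L / 2))) *
          mdot B (G • (F₀ * F₀ᵀ * F₀) + ((L / 2) * frob F₀ ^ 2) • F₀) := by
        have h1 : -(b * ((G + L/2) * u^3)) ≤
            mdot B (G • (F₀ * F₀ᵀ * F₀) + ((L / 2) * frob F₀ ^ 2) • F₀) := by
          refine le_trans ?_ (neg_le_mdot B _)
          rw [neg_le_neg_iff]
          exact mul_le_mul_of_nonneg_left hx hb0
        have h2 : (0:ℝ) < 1 / (2 * (G + L / 2)) := by positivity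
        calc -(b * u^3 / 2)
            = (1 / (2 * (G + L / 2)) * (G + L/2)) * (-(b * u^3)) := by rw [hc]; ring
          _ = (1 / (2 * (G + L / 2))) * (-(b * ((G + L/2) * u^3))) := by ring
          _ ≤ _ := mul_le_mul_of_nonneg_left h1 h2.le
      have hlast : frob (F₀ᵀ * F₀) ^ 2 ≤ u^4 := by
        have h1 : frob (F₀ᵀ * F₀) ≤ u * u := by
          have h2 := frob_mul_le F₀ᵀ F₀
          rwa [frob_transpose, e_frob] at h2
        have h3 := pow_le_pow_left₀ (frob_nonneg _) h1 2
        calc frob (F₀ᵀ * F₀) ^ 2 ≤ (u*u)^2 := h3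
          _ = u^4 := by ring
      have hbu : b ≤ (3/8) * u := by
        have h1 : b^3 ≤ ((3/8)*u)^3 := by
          calc b^3 ≤ (27/8^3) * a := hB
            _ = ((3/8)*u)^3 := by rw [← hu3]; ring
        exact le_of_pow_le_pow_left₀ (by norm_num) (mul_nonneg (by norm_num) hup.le) h1
      rw [ha43, e_mdot]
      have hfinal := final_ineq u b hup hb0 hbu
      linarith [hmid, hlast, hfinal]
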